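/- Let k, l ≥ 1 and r ≥ 0 be integers, and let f, g : ℍ → ℂ be holomorphic. Then [f,g]_r = Σ_{s=0}^r (−1)^s · C(k+r−1, s) · C(l+r−1, r−s) · R_k^{r−s}(f) · R_l^s(g), where C(a,s) denotes the binomial coefficient. -/

import Mathlib

noncomputable section

open Complex Real

/-- The upper half-plane, as a subset of `ℂ`. -/
def UHP : Set ℂ := {z : ℂ | 0 < z.im}

/-- `e(z) = exp(2πiz)`. -/
def e (z : ℂ) : ℂ := Complex.exp (2 * (π : ℂ) * I * z)

/-- The Wirtinger derivative `∂f/∂τ = (1/2)(∂f/∂x − i ∂f/∂y)`. -/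
def dtau (f : ℂ → ℂ) (z : ℂ) : ℂ := (fderiv ℝ f z 1 - I * fderiv ℝ f z I) / 2

/-- The raising operator `R_w f = (1/(2πi)) (∂f/∂τ + w f/(τ − τ̄))`. -/
def Rop (w : ℤ) (f : ℂ → ℂ) : ℂ → ℂ :=
  fun z => (1 / (2 * (π : ℂ) * I)) * (dtau f z + (w : ℂ) * f z / (z - (starRingEnd ℂ) z))

/-- Iterated raising operator: `R_w^0 = id`, `R_w^{n+1} = R_{w+2n} ∘ R_w^n`. -/
def Riter (w : ℤ) : ℕ → (ℂ → ℂ) → (ℂ → ℂ)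
  | 0 => fun f => f
  | n + 1 => fun f => Rop (w + 2 * n) (Riter w n f)

/-- Normalized derivative `f^{(r)} = (2πi)^{−r} d^r f/dτ^r`. -/
def fder (r : ℕ) (f : ℂ → ℂ) : ℂ → ℂ :=
  fun z => ((2 * (π : ℂ) * I) ^ r)⁻¹ * iteratedDeriv r f z

/-- The Rankin–Cohen bracket of `f` and `g` with weight parameters `k`, `l`:
`[f,g]_r = Σ_{s=0}^r (−1)^s C(k+r−1,s) C(l+r−1,r−s) f^{(r−s)} g^{(s)}`. -/
def RCbracket (k l r : ℕ) (f g : ℂ → ℂ) : ℂ → ℂ :=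
  fun z => ∑ s ∈ Finset.range (r + 1),
    (-1 : ℂ) ^ s * (Nat.choose (k + r - 1) s : ℂ) * (Nat.choose (l + r - 1) (r - s) : ℂ) *
      fder (r - s) f z * fder s g z


lemma isOpen_UHP : IsOpen UHP := isOpen_lt continuous_const Complex.continuous_im

lemma sub_conj_ne_zero {z : ℂ} (hz : z ∈ UHP) : z - (starRingEnd ℂ) z ≠ 0 := by
  have : (z - (starRingEnd ℂ) z).im = 2 * z.im := by
    simp [Complex.sub_im, Complex.conj_im]; ring
  intro h
  have hz' : (0:ℝ) < z.im := hz
  rw [h] at this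
  simp at this
  linarith

-- dtau API

lemma dtau_congr {f g : ℂ → ℂ} {U : Set ℂ} (hU : IsOpen U) (h : Set.EqOn f g U)
    {z : ℂ} (hz : z ∈ U) : dtau f z = dtau g z := by
  have : f =ᶠ[nhds z] g := Filter.eventuallyEq_of_mem (hU.mem_nhds hz) h
  unfold dtau
  rw [this.fderiv_eq]

lemma dtau_const_mul {f : ℂ → ℂ} (c : ℂ) (hf : DifferentiableAt ℝ f z) :
    dtau (fun x => c * f x) z = c * dtau f z := by
  unfold dtau
  rw [fderiv_const_mul hf c]
  simp [ContinuousLinearMap.smul_apply, smul_eq_mul]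
  ring

lemma dtau_mul {f g : ℂ → ℂ} {z : ℂ} (hf : DifferentiableAt ℝ f z) (hg : DifferentiableAt ℝ g z) :
    dtau (fun x => f x * g x) z = dtau f z * g z + f z * dtau g z := by
  unfold dtau
  rw [fderiv_fun_mul hf hg]
  simp [ContinuousLinearMap.smul_apply, smul_eq_mul]
  ring

lemma dtau_sum {ι : Type*} (u : Finset ι) (A : ι → ℂ → ℂ) {z : ℂ}
    (h : ∀ i ∈ u, DifferentiableAt ℝ (A i) z) :
    dtau (fun x => ∑ i ∈ u, A i x) z = ∑ i ∈ u, dtau (A i) z := by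
  unfold dtau
  rw [fderiv_fun_sum h]
  rw [ContinuousLinearMap.sum_apply, ContinuousLinearMap.sum_apply, Finset.mul_sum,
    ← Finset.sum_sub_distrib, Finset.sum_div]

lemma dtau_holo {f : ℂ → ℂ} {z : ℂ} (hf : DifferentiableAt ℂ f z) :
    dtau f z = deriv f z := by
  unfold dtau
  rw [hf.fderiv_restrictScalars ℝ]
  have h1 : (fderiv ℂ f z) 1 = deriv f z := by simp [fderiv_apply_one_eq_deriv]
  have hI : (fderiv ℂ f z) I = I * deriv f z := by
    have := (fderiv ℂ f z).map_smul I (1:ℂ)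
    simp only [smul_eq_mul, mul_one] at this
    rw [this, h1]
  simp only [ContinuousLinearMap.coe_restrictScalars', h1, hI]
  rw [show I * (I * deriv f z) = (I*I) * deriv f z by ring, Complex.I_mul_I]
  ring

lemma diffR_conj {z : ℂ} : DifferentiableAt ℝ (fun x : ℂ => (starRingEnd ℂ) x) z := by
  have : (fun x : ℂ => (starRingEnd ℂ) x) = ⇑(Complex.conjCLE) := by
    funext x; simp [Complex.conjCLE_apply]
  rw [this]
  exact Complex.conjCLE.differentiable.differentiableAt

lemma dtau_conj {z : ℂ} : dtau (fun x : ℂ => (starRingEnd ℂ) x) z = 0 := by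
  have h : (fun x : ℂ => (starRingEnd ℂ) x) = ⇑(Complex.conjCLE) := by
    funext x; simp [Complex.conjCLE_apply]
  unfold dtau
  rw [h, ContinuousLinearEquiv.fderiv]
  simp [Complex.conjCLE_apply]

lemma dtau_id {z : ℂ} : dtau (fun x : ℂ => x) z = 1 := by
  unfold dtau
  rw [fderiv_id']
  simp

-- the function z - conj z

lemma diffR_W {z : ℂ} : DifferentiableAt ℝ (fun x : ℂ => x - (starRingEnd ℂ) x) z :=
  differentiableAt_id.sub diffR_conj

lemma dtau_sub {f g : ℂ → ℂ} {z : ℂ} (hf : DifferentiableAt ℝ f z) (hg : DifferentiableAt ℝ g z) :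
    dtau (fun x => f x - g x) z = dtau f z - dtau g z := by
  unfold dtau
  rw [fderiv_fun_sub hf hg]
  simp only [ContinuousLinearMap.sub_apply]
  ring

lemma dtau_W {z : ℂ} : dtau (fun x : ℂ => x - (starRingEnd ℂ) x) z = 1 := by
  rw [dtau_sub differentiableAt_fun_id diffR_conj, dtau_id, dtau_conj]; ring

lemma dtau_comp {h g : ℂ → ℂ} {z : ℂ} (hh : DifferentiableAt ℂ h (g z))
    (hg : DifferentiableAt ℝ g z) :
    dtau (fun x => h (g x)) z = deriv h (g z) * dtau g z := by
  unfold dtau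
  have hcomp : fderiv ℝ (fun x => h (g x)) z
      = ((fderiv ℂ h (g z)).restrictScalars ℝ).comp (fderiv ℝ g z) := by
    rw [← (hh.fderiv_restrictScalars ℝ)]
    exact fderiv_comp z (hh.restrictScalars ℝ) hg
  have key : ∀ c : ℂ, (fderiv ℂ h (g z)) c = c * deriv h (g z) := by
    intro c
    have := (fderiv ℂ h (g z)).map_smul c (1:ℂ)
    simp only [smul_eq_mul, mul_one] at this
    rw [this, fderiv_apply_one_eq_deriv]
  rw [hcomp]
  simp only [ContinuousLinearMap.comp_apply, ContinuousLinearMap.coe_restrictScalars', key]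
  ring

def V : ℂ → ℂ := fun z => ((2 * (π:ℂ) * I) * (z - (starRingEnd ℂ) z))⁻¹

lemma twopiI_ne : (2 * (π:ℂ) * I) ≠ 0 := by
  simp [Complex.ext_iff, Real.pi_ne_zero, I_ne_zero]

lemma diffR_V {z : ℂ} (hz : z ∈ UHP) : DifferentiableAt ℝ V z := by
  have h1 : DifferentiableAt ℝ (fun x : ℂ => (2 * (π:ℂ) * I) * (x - (starRingEnd ℂ) x)) z :=
    (diffR_W.const_mul _)
  have h2 : (2 * (π:ℂ) * I) * (z - (starRingEnd ℂ) z) ≠ 0 :=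
    mul_ne_zero twopiI_ne (sub_conj_ne_zero hz)
  have h3 : DifferentiableAt ℂ (fun y : ℂ => y⁻¹) ((2 * (π:ℂ) * I) * (z - (starRingEnd ℂ) z)) :=
    differentiableAt_inv h2
  exact (h3.restrictScalars ℝ).comp z h1

lemma dtau_V {z : ℂ} (hz : z ∈ UHP) : dtau V z = -(2 * (π:ℂ) * I) * (V z)^2 := by
  have h1 : DifferentiableAt ℝ (fun x : ℂ => (2 * (π:ℂ) * I) * (x - (starRingEnd ℂ) x)) z :=
    (diffR_W.const_mul _)
  have h2 : (2 * (π:ℂ) * I) * (z - (starRingEnd ℂ) z) ≠ 0 :=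
    mul_ne_zero twopiI_ne (sub_conj_ne_zero hz)
  have hcomp : dtau (fun x : ℂ => ((2 * (π:ℂ) * I) * (x - (starRingEnd ℂ) x))⁻¹) z
      = deriv (fun y : ℂ => y⁻¹) ((2 * (π:ℂ) * I) * (z - (starRingEnd ℂ) z))
        * dtau (fun x : ℂ => (2 * (π:ℂ) * I) * (x - (starRingEnd ℂ) x)) z :=
    dtau_comp (h := fun y : ℂ => y⁻¹)
      (g := fun x : ℂ => (2 * (π:ℂ) * I) * (x - (starRingEnd ℂ) x))
      (differentiableAt_inv h2) h1
  have hV : dtau V z = dtau (fun x : ℂ => ((2 * (π:ℂ) * I) * (x - (starRingEnd ℂ) x))⁻¹) z := rfl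
  rw [hV, hcomp, deriv_inv, dtau_const_mul _ diffR_W, dtau_W]
  unfold V
  field_simp

lemma dtau_V_pow {z : ℂ} (hz : z ∈ UHP) (m : ℕ) :
    dtau (fun x => V x ^ m) z = -(2 * (π:ℂ) * I) * m * (V z)^(m+1) := by
  induction m with
  | zero => simp [dtau]
  | succ m ih =>
    have : (fun x => V x ^ (m+1)) = fun x => V x ^ m * V x := by funext x; ring
    rw [this, dtau_mul ((diffR_V hz).fun_pow m) (diffR_V hz), ih, dtau_V hz]
    push_cast
    ring

lemma analytic_iter {f : ℂ → ℂ} (hf : DifferentiableOn ℂ f UHP) (j : ℕ) :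
    AnalyticOnNhd ℂ (iteratedDeriv j f) UHP := by
  induction j with
  | zero => simpa [iteratedDeriv_zero] using hf.analyticOnNhd isOpen_UHP
  | succ j ih => rw [iteratedDeriv_succ]; exact ih.deriv

lemma diffC_iter {f : ℂ → ℂ} (hf : DifferentiableOn ℂ f UHP) (j : ℕ) {z : ℂ} (hz : z ∈ UHP) :
    DifferentiableAt ℂ (iteratedDeriv j f) z :=
  (analytic_iter hf j z hz).differentiableAt

lemma diffR_fder {f : ℂ → ℂ} (hf : DifferentiableOn ℂ f UHP) (j : ℕ) {z : ℂ} (hz : z ∈ UHP) :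
    DifferentiableAt ℝ (fder j f) z := by
  unfold fder
  exact (((diffC_iter hf j hz).restrictScalars ℝ).const_mul _)

lemma dtau_fder {f : ℂ → ℂ} (hf : DifferentiableOn ℂ f UHP) (j : ℕ) {z : ℂ} (hz : z ∈ UHP) :
    dtau (fder j f) z = (2 * (π:ℂ) * I) * fder (j+1) f z := by
  unfold fder
  rw [dtau_const_mul _ ((diffC_iter hf j hz).restrictScalars ℝ),
    dtau_holo (diffC_iter hf j hz), ← iteratedDeriv_succ]
  have h : (2*(π:ℂ)*I) * ((2*(π:ℂ)*I)^(j+1))⁻¹ = ((2*(π:ℂ)*I)^j)⁻¹ := by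
    rw [pow_succ, mul_inv, ← mul_assoc, mul_comm (2*(π:ℂ)*I), mul_assoc,
      mul_inv_cancel₀ twopiI_ne, mul_one]
  rw [← mul_assoc, h]

def ascN (x m : ℕ) : ℕ := ∏ t ∈ Finset.range m, (x + t)

def ascC (x : ℂ) (m : ℕ) : ℂ := ∏ t ∈ Finset.range m, (x + t)

lemma ascN_cast (x m : ℕ) : ((ascN x m : ℕ) : ℂ) = ascC (x : ℂ) m := by
  unfold ascN ascC
  push_cast
  rfl

lemma ascC_succ (x : ℂ) (m : ℕ) : ascC x (m+1) = ascC x m * (x + m) :=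
  Finset.prod_range_succ _ _

lemma ascC_succ' (x : ℂ) (m : ℕ) : ascC x (m+1) = x * ascC (x+1) m := by
  unfold ascC
  rw [Finset.prod_range_succ']
  have h : ∀ t ∈ Finset.range m, (x + (((t+1):ℕ):ℂ)) = ((x+1) + (t:ℕ)) := by
    intro t _; push_cast; ring
  rw [Finset.prod_congr rfl h]
  push_cast
  ring

lemma ascN_fact (x m : ℕ) : ascN (x+1) m * Nat.factorial x = Nat.factorial (x + m) := by
  induction m with
  | zero => simp [ascN]
  | succ m ih =>
    unfold ascN at *
    rw [Finset.prod_range_succ, mul_comm _ (x+1+m), mul_assoc, ih,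
      show x + (m+1) = (x+m) + 1 by omega, Nat.factorial_succ,
      show x + 1 + m = x + m + 1 by omega]

lemma step_coef (x : ℂ) (j m : ℕ) :
    (((j+m+2).choose (j+1) : ℕ) : ℂ) * ascC (x+1) (m+1)
      = (((j+m+1).choose (j+1) : ℕ) : ℂ) * ascC (x+1) m * (x + (j:ℂ) + (m:ℂ) + 2)
        + (((j+m+1).choose j : ℕ) : ℂ) * ascC x (m+1) := by
  have h1c : (((j+m+2).choose (j+1) : ℕ) : ℂ)
      = (((j+m+1).choose j : ℕ) : ℂ) + (((j+m+1).choose (j+1) : ℕ) : ℂ) := by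
    rw [show j+m+2 = (j+m+1)+1 by omega, Nat.choose_succ_succ]
    push_cast; ring
  have h2n : (j+m+1).choose (j+1) * (j+1) = (j+m+1).choose j * (m+1) := by
    have := Nat.choose_succ_right_eq (j+m+1) j
    rwa [show j+m+1-j = m+1 by omega] at this
  have h2c : (((j+m+1).choose (j+1) : ℕ) : ℂ) * ((j:ℂ)+1)
      = (((j+m+1).choose j : ℕ) : ℂ) * ((m:ℂ)+1) := by
    exact_mod_cast congrArg (Nat.cast : ℕ → ℂ) h2n
  rw [ascC_succ (x+1) m, ascC_succ' x m]
  linear_combination (ascC (x+1) m * (x+(m:ℂ)+1)) * h1c - ascC (x+1) m * h2c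

lemma sum_succ_succ (G : ℕ → ℂ) (n : ℕ) :
    ∑ j ∈ Finset.range (n+2), G j
      = (∑ j ∈ Finset.range n, G (j+1)) + G 0 + G (n+1) := by
  rw [Finset.sum_range_succ' G (n+1), Finset.sum_range_succ (fun j => G (j+1)) n]
  ring

lemma sum_shift (v w : ℂ) (F : ℕ → ℂ) (n : ℕ) :
    (∑ j ∈ Finset.range (n+1), ((n.choose j : ℕ):ℂ) * ascC (w+(j:ℂ)) (n-j) *
        ((w + 2*(n:ℂ) - ((n-j : ℕ):ℂ)) * (v^(n-j+1) * F j)))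
    + (∑ j ∈ Finset.range (n+1), ((n.choose j : ℕ):ℂ) * ascC (w+(j:ℂ)) (n-j) *
        (v^(n-j) * F (j+1)))
    = ∑ j ∈ Finset.range (n+2), (((n+1).choose j : ℕ):ℂ) * ascC (w+(j:ℂ)) (n+1-j) *
        (v^(n+1-j) * F j) := by
  set t1 : ℕ → ℂ := fun j => ((n.choose j : ℕ):ℂ) * ascC (w+(j:ℂ)) (n-j) *
        ((w + 2*(n:ℂ) - ((n-j : ℕ):ℂ)) * (v^(n-j+1) * F j)) with ht1
  set t2 : ℕ → ℂ := fun j => ((n.choose j : ℕ):ℂ) * ascC (w+(j:ℂ)) (n-j) *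
        (v^(n-j) * F (j+1)) with ht2
  set rr : ℕ → ℂ := fun j => (((n+1).choose j : ℕ):ℂ) * ascC (w+(j:ℂ)) (n+1-j) *
        (v^(n+1-j) * F j) with hrr
  rw [Finset.sum_range_succ' t1 n, Finset.sum_range_succ t2 n, sum_succ_succ rr n]
  have e0 : t1 0 = rr 0 := by
    rw [ht1, hrr]
    simp only [Nat.choose_zero_right, Nat.sub_zero, Nat.cast_zero, add_zero, Nat.cast_one]
    rw [ascC_succ w n]
    ring
  have e1 : t2 n = rr (n+1) := by
    rw [ht2, hrr]
    simp only [Nat.choose_self, Nat.sub_self, Nat.add_sub_cancel, Nat.cast_one]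
    simp [ascC]
  have emid : ∀ j ∈ Finset.range n, rr (j+1) = t1 (j+1) + t2 j := by
    intro j hj
    have hjn : j < n := Finset.mem_range.mp hj
    obtain ⟨m, rfl⟩ : ∃ m, n = j + m + 1 := ⟨n - j - 1, by omega⟩
    rw [ht1, ht2, hrr]
    simp only [show j+m+1+1-(j+1) = m+1 by omega, show j+m+1-(j+1) = m by omega,
      show j+m+1-j = m+1 by omega, show j+m+1-(j+1)+1 = m+1 by omega,
      show j+m+1+1 = j+m+2 by omega]
    have hc : (w + ((j+1 : ℕ):ℂ)) = (w + (j:ℂ)) + 1 := by push_cast; ring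
    rw [hc]
    have := step_coef (w + (j:ℂ)) j m
    push_cast at this ⊢
    linear_combination (v^(m+1) * F (j+1)) * this
  rw [Finset.sum_congr rfl emid, Finset.sum_add_distrib, e0, e1]
  ring

lemma hVz {z : ℂ} (hz : z ∈ UHP) :
    (z - (starRingEnd ℂ) z)⁻¹ = (2 * (π:ℂ) * I) * V z := by
  unfold V
  rw [mul_inv]
  rw [← mul_assoc, mul_inv_cancel₀ twopiI_ne, one_mul]

lemma expansion (w : ℤ) {f : ℂ → ℂ} (hf : DifferentiableOn ℂ f UHP) (n : ℕ) :
    ∀ z ∈ UHP, Riter w n f z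
      = ∑ j ∈ Finset.range (n+1),
          ((n.choose j : ℕ) : ℂ) * ascC ((w:ℂ)+(j:ℂ)) (n-j) * (V z ^ (n-j) * fder j f z) := by
  induction n with
  | zero =>
    intro z hz
    simp [Riter, ascC, fder]
  | succ n ih =>
    intro z hz
    have hterm_diff : ∀ j ∈ Finset.range (n+1), DifferentiableAt ℝ
        (fun x => ((n.choose j : ℕ) : ℂ) * ascC ((w:ℂ)+(j:ℂ)) (n-j) *
          (V x ^ (n-j) * fder j f x)) z := by
      intro j _
      exact (((diffR_V hz).pow (n-j)).mul (diffR_fder hf j hz)).const_mul _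
    have hdt : dtau (Riter w n f) z = ∑ j ∈ Finset.range (n+1),
        ((n.choose j : ℕ) : ℂ) * ascC ((w:ℂ)+(j:ℂ)) (n-j) *
          (-(2 * (π:ℂ) * I) * (n-j : ℕ) * (V z)^(n-j+1) * fder j f z
            + V z^(n-j) * ((2 * (π:ℂ) * I) * fder (j+1) f z)) := by
      rw [dtau_congr isOpen_UHP (fun x hx => ih x hx) hz, dtau_sum _ _ hterm_diff]
      apply Finset.sum_congr rfl
      intro j _
      rw [show (fun x => ((n.choose j : ℕ) : ℂ) * ascC ((w:ℂ)+(j:ℂ)) (n-j) *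
            (V x ^ (n-j) * fder j f x))
          = (fun x => (((n.choose j : ℕ) : ℂ) * ascC ((w:ℂ)+(j:ℂ)) (n-j)) *
            (V x ^ (n-j) * fder j f x)) from rfl]
      rw [dtau_const_mul _ (((diffR_V hz).fun_pow (n-j)).fun_mul (diffR_fder hf j hz))]
      rw [dtau_mul ((diffR_V hz).fun_pow (n-j)) (diffR_fder hf j hz)]
      rw [dtau_V_pow hz, dtau_fder hf j hz]
    show Rop (w + 2*(n:ℕ)) (Riter w n f) z = _
    unfold Rop
    rw [hdt, ih z hz]
    rw [show ∀ X : ℂ, X / (z - (starRingEnd ℂ) z) = X * ((2*(π:ℂ)*I) * V z) from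
      fun X => by rw [div_eq_mul_inv, hVz hz]]
    have hstep : (1 / (2 * (π:ℂ) * I)) *
        ((∑ j ∈ Finset.range (n+1), ((n.choose j : ℕ) : ℂ) * ascC ((w:ℂ)+(j:ℂ)) (n-j) *
          (-(2 * (π:ℂ) * I) * (n-j : ℕ) * (V z)^(n-j+1) * fder j f z
            + V z^(n-j) * ((2 * (π:ℂ) * I) * fder (j+1) f z)))
        + ((w + 2*(n:ℕ) : ℤ) : ℂ) * (∑ j ∈ Finset.range (n+1),
            ((n.choose j : ℕ) : ℂ) * ascC ((w:ℂ)+(j:ℂ)) (n-j) * (V z ^ (n-j) * fder j f z))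
          * ((2*(π:ℂ)*I) * V z))
      = (∑ j ∈ Finset.range (n+1), ((n.choose j : ℕ):ℂ) * ascC ((w:ℂ)+(j:ℂ)) (n-j) *
          (((w:ℂ) + 2*((n:ℕ):ℂ) - ((n-j : ℕ):ℂ)) * (V z^(n-j+1) * fder j f z)))
        + (∑ j ∈ Finset.range (n+1), ((n.choose j : ℕ):ℂ) * ascC ((w:ℂ)+(j:ℂ)) (n-j) *
          (V z^(n-j) * fder (j+1) f z)) := by
      rw [mul_add, Finset.mul_sum, Finset.mul_sum, Finset.sum_mul, Finset.mul_sum,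
        ← Finset.sum_add_distrib, ← Finset.sum_add_distrib]
      apply Finset.sum_congr rfl
      intro j _
      have hπ : (2 * (π:ℂ) * I) ≠ 0 := twopiI_ne
      push_cast
      field_simp
      ring
    rw [hstep, sum_shift (V z) ((w:ℂ)) (fun j => fder j f z) n]

lemma claimstar (k' l' a b t m : ℕ) :
    ((k'+a+b+t+m).choose (b+t)) * ((l'+a+b+t+m).choose (a+m)) * ((a+m).choose a)
      * ascN (k'+1+a) m * ((b+t).choose b) * ascN (l'+1+b) t
      * (Nat.factorial m * Nat.factorial t * Nat.factorial a * Nat.factorial (k'+a)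
         * Nat.factorial b * Nat.factorial (l'+b))
    = Nat.factorial (k'+a+b+t+m) * Nat.factorial (l'+a+b+t+m) := by
  have h1 : (b+t).choose b * Nat.factorial b * Nat.factorial t = Nat.factorial (b+t) := by
    have := Nat.choose_mul_factorial_mul_factorial (Nat.le_add_right b t)
    rwa [show b+t-b = t by omega] at this
  have h2 : ascN (l'+1+b) t * Nat.factorial (l'+b) = Nat.factorial (l'+b+t) := by
    have := ascN_fact (l'+b) t
    rwa [show l'+b+1 = l'+1+b by omega] at this
  have h3 : (a+m).choose a * Nat.factorial a * Nat.factorial m = Nat.factorial (a+m) := by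
    have := Nat.choose_mul_factorial_mul_factorial (Nat.le_add_right a m)
    rwa [show a+m-a = m by omega] at this
  have h4 : ascN (k'+1+a) m * Nat.factorial (k'+a) = Nat.factorial (k'+a+m) := by
    have := ascN_fact (k'+a) m
    rwa [show k'+a+1 = k'+1+a by omega] at this
  have h5 : (k'+a+b+t+m).choose (b+t) * Nat.factorial (b+t) * Nat.factorial (k'+a+m)
      = Nat.factorial (k'+a+b+t+m) := by
    have := Nat.choose_mul_factorial_mul_factorial (show b+t ≤ k'+a+b+t+m by omega)
    rwa [show k'+a+b+t+m-(b+t) = k'+a+m by omega] at this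
  have h6 : (l'+a+b+t+m).choose (a+m) * Nat.factorial (a+m) * Nat.factorial (l'+b+t)
      = Nat.factorial (l'+a+b+t+m) := by
    have := Nat.choose_mul_factorial_mul_factorial (show a+m ≤ l'+a+b+t+m by omega)
    rwa [show l'+a+b+t+m-(a+m) = l'+b+t by omega] at this
  calc ((k'+a+b+t+m).choose (b+t)) * ((l'+a+b+t+m).choose (a+m)) * ((a+m).choose a)
      * ascN (k'+1+a) m * ((b+t).choose b) * ascN (l'+1+b) t
      * (Nat.factorial m * Nat.factorial t * Nat.factorial a * Nat.factorial (k'+a)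
         * Nat.factorial b * Nat.factorial (l'+b))
      = ((b+t).choose b * Nat.factorial b * Nat.factorial t)
        * (ascN (l'+1+b) t * Nat.factorial (l'+b))
        * ((a+m).choose a * Nat.factorial a * Nat.factorial m)
        * (ascN (k'+1+a) m * Nat.factorial (k'+a))
        * ((k'+a+b+t+m).choose (b+t)) * ((l'+a+b+t+m).choose (a+m)) := by ring
    _ = Nat.factorial (b+t) * Nat.factorial (l'+b+t) * Nat.factorial (a+m)
        * Nat.factorial (k'+a+m)
        * ((k'+a+b+t+m).choose (b+t)) * ((l'+a+b+t+m).choose (a+m)) := by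
        rw [h1, h2, h3, h4]
    _ = ((k'+a+b+t+m).choose (b+t) * Nat.factorial (b+t) * Nat.factorial (k'+a+m))
        * ((l'+a+b+t+m).choose (a+m) * Nat.factorial (a+m) * Nat.factorial (l'+b+t)) := by
        ring
    _ = Nat.factorial (k'+a+b+t+m) * Nat.factorial (l'+a+b+t+m) := by rw [h5, h6]

lemma inner_vanish (k' l' a b n : ℕ) (hn : n ≠ 0) :
    ∑ t ∈ Finset.range (n+1), ((-1:ℤ)^t *
      ((((k'+a+b+n).choose (b+t)) * ((l'+a+b+n).choose (a+(n-t))) * ((a+(n-t)).choose a)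
        * ascN (k'+1+a) (n-t) * ((b+t).choose b) * ascN (l'+1+b) t : ℕ) : ℤ)) = 0 := by
  set C0 : ℤ := ((Nat.factorial n * Nat.factorial a * Nat.factorial (k'+a)
      * Nat.factorial b * Nat.factorial (l'+b) : ℕ) : ℤ) with hC0
  have hC0pos : C0 ≠ 0 := by
    rw [hC0]
    simp [Nat.factorial_ne_zero]
  have key : ∀ t ∈ Finset.range (n+1),
      (k'+a+b+n).choose (b+t) * ((l'+a+b+n).choose (a+(n-t))) * ((a+(n-t)).choose a)
        * ascN (k'+1+a) (n-t) * ((b+t).choose b) * ascN (l'+1+b) t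
        * (Nat.factorial n * Nat.factorial a * Nat.factorial (k'+a)
          * Nat.factorial b * Nat.factorial (l'+b))
      = Nat.factorial (k'+a+b+n) * Nat.factorial (l'+a+b+n) * (n.choose t) := by
    intro t ht
    have htn : t ≤ n := by
      have := Finset.mem_range.mp ht; omega
    obtain ⟨m, rfl⟩ : ∃ m, n = t + m := ⟨n - t, by omega⟩
    rw [show t+m-t = m by omega]
    have hcs := claimstar k' l' a b t m
    have hnt : (t+m).choose t * Nat.factorial t * Nat.factorial m = Nat.factorial (t+m) := by
      have := Nat.choose_mul_factorial_mul_factorial (Nat.le_add_right t m)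
      rwa [show t+m-t = m by omega] at this
    rw [show k'+a+b+(t+m) = k'+a+b+t+m by omega, show l'+a+b+(t+m) = l'+a+b+t+m by omega]
    calc ((k'+a+b+t+m).choose (b+t)) * ((l'+a+b+t+m).choose (a+m)) * ((a+m).choose a)
        * ascN (k'+1+a) m * ((b+t).choose b) * ascN (l'+1+b) t
        * (Nat.factorial (t+m) * Nat.factorial a * Nat.factorial (k'+a)
          * Nat.factorial b * Nat.factorial (l'+b))
        = (((k'+a+b+t+m).choose (b+t)) * ((l'+a+b+t+m).choose (a+m)) * ((a+m).choose a)
          * ascN (k'+1+a) m * ((b+t).choose b) * ascN (l'+1+b) t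
          * (Nat.factorial m * Nat.factorial t * Nat.factorial a * Nat.factorial (k'+a)
            * Nat.factorial b * Nat.factorial (l'+b))) * ((t+m).choose t) := by
          rw [← hnt]; ring
      _ = (Nat.factorial (k'+a+b+t+m) * Nat.factorial (l'+a+b+t+m)) * ((t+m).choose t) := by
          rw [hcs]
  have hmul : C0 * (∑ t ∈ Finset.range (n+1), ((-1:ℤ)^t *
      ((((k'+a+b+n).choose (b+t)) * ((l'+a+b+n).choose (a+(n-t))) * ((a+(n-t)).choose a)
        * ascN (k'+1+a) (n-t) * ((b+t).choose b) * ascN (l'+1+b) t : ℕ) : ℤ))) = 0 := by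
    rw [Finset.mul_sum]
    have : ∀ t ∈ Finset.range (n+1), C0 * ((-1:ℤ)^t *
        ((((k'+a+b+n).choose (b+t)) * ((l'+a+b+n).choose (a+(n-t))) * ((a+(n-t)).choose a)
          * ascN (k'+1+a) (n-t) * ((b+t).choose b) * ascN (l'+1+b) t : ℕ) : ℤ))
        = ((Nat.factorial (k'+a+b+n) * Nat.factorial (l'+a+b+n) : ℕ) : ℤ)
          * ((-1:ℤ)^t * (n.choose t : ℕ)) := by
      intro t ht
      have hk := key t ht
      have hkz : ((((((k'+a+b+n).choose (b+t)) * ((l'+a+b+n).choose (a+(n-t)))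
          * ((a+(n-t)).choose a) * ascN (k'+1+a) (n-t) * ((b+t).choose b)
          * ascN (l'+1+b) t) : ℕ) : ℤ) * C0
          = ((Nat.factorial (k'+a+b+n) * Nat.factorial (l'+a+b+n) : ℕ) : ℤ)
            * ((n.choose t : ℕ) : ℤ)) := by
        rw [hC0]
        push_cast
        exact_mod_cast congrArg (Nat.cast : ℕ → ℤ) hk
      push_cast at hkz ⊢
      linear_combination ((-1:ℤ)^t) * hkz
    rw [Finset.sum_congr rfl this, ← Finset.mul_sum,
      Int.alternating_sum_range_choose_of_ne hn, mul_zero]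
  rcases mul_eq_zero.mp hmul with h | h
  · exact absurd h hC0pos
  · exact h

lemma inner_eval (k' l' r a b : ℕ) (hb : b ∈ Finset.range (r+1)) (v Fa Gb : ℂ) :
    ∑ s ∈ Finset.range (r+1), (-1:ℂ)^s * (((k'+r).choose s : ℕ):ℂ)
        * (((l'+r).choose (r-s) : ℕ):ℂ)
      * ((((r-s).choose a : ℕ):ℂ) * ascC (((k'+1+a : ℕ):ℕ):ℂ) (r-s-a) * (v^(r-s-a) * Fa)
        * ((((s.choose b : ℕ)):ℂ) * ascC (((l'+1+b : ℕ):ℕ):ℂ) (s-b) * (v^(s-b) * Gb)))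
    = if a + b = r then
        (-1:ℂ)^b * (((k'+r).choose b : ℕ):ℂ) * (((l'+r).choose a : ℕ):ℂ) * (Fa * Gb)
      else 0 := by
  have hbr : b ≤ r := by have := Finset.mem_range.mp hb; omega
  by_cases hab : a + b = r
  · rw [if_pos hab]
    rw [Finset.sum_eq_single_of_mem b hb]
    · rw [show r - b = a by omega]
      simp [ascC, Nat.choose_self, Nat.sub_self]
    · intro s hs hsb
      rcases Nat.lt_or_ge s b with h | h
      · rw [Nat.choose_eq_zero_of_lt h]
        simp
      · have : r - s < a := by
          have hsr : s ≤ r := by have := Finset.mem_range.mp hs; omega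
          omega
        rw [Nat.choose_eq_zero_of_lt this]
        simp
  · rw [if_neg hab]
    rcases Nat.lt_or_ge r (a+b) with hgt | hlt
    · apply Finset.sum_eq_zero
      intro s hs
      rcases Nat.lt_or_ge s b with h | h
      · rw [Nat.choose_eq_zero_of_lt h]; simp
      · have : r - s < a := by
          have hsr : s ≤ r := by have := Finset.mem_range.mp hs; omega
          omega
        rw [Nat.choose_eq_zero_of_lt this]; simp
    · -- a + b < r
      have habr : a + b < r := by omega
      set n := r - a - b with hn
      have hnpos : n ≠ 0 := by omega
      have hsub : Finset.Ico b (r-a+1) ⊆ Finset.range (r+1) := by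
        intro s hs
        rw [Finset.mem_Ico] at hs
        rw [Finset.mem_range]
        omega
      rw [← Finset.sum_subset hsub]
      · rw [Finset.sum_Ico_eq_sum_range]
        rw [show r - a + 1 - b = n + 1 by omega]
        have hcong : ∀ t ∈ Finset.range (n+1),
            (-1:ℂ)^(b+t) * (((k'+r).choose (b+t) : ℕ):ℂ)
              * (((l'+r).choose (r-(b+t)) : ℕ):ℂ)
              * ((((r-(b+t)).choose a : ℕ):ℂ) * ascC (((k'+1+a : ℕ):ℕ):ℂ) (r-(b+t)-a)
                  * (v^(r-(b+t)-a) * Fa)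
                * ((((b+t).choose b : ℕ):ℂ) * ascC (((l'+1+b : ℕ):ℕ):ℂ) ((b+t)-b)
                  * (v^((b+t)-b) * Gb)))
            = ((-1:ℂ)^b * (v^n * (Fa * Gb))) * ((-1:ℂ)^t *
                (((k'+a+b+n).choose (b+t) * ((l'+a+b+n).choose (a+(n-t)))
                  * ((a+(n-t)).choose a) * ascN (k'+1+a) (n-t) * ((b+t).choose b)
                  * ascN (l'+1+b) t : ℕ) : ℂ)) := by
          intro t ht
          have htn : t ≤ n := by have := Finset.mem_range.mp ht; omega
          rw [show r-(b+t) = a+(n-t) by omega, show a+(n-t)-a = n-t by omega,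
            show b+t-b = t by omega, show k'+r = k'+a+b+n by omega,
            show l'+r = l'+a+b+n by omega, ← ascN_cast (k'+1+a) (n-t),
            ← ascN_cast (l'+1+b) t]
          push_cast
          rw [show (-1:ℂ)^(b+t) = (-1:ℂ)^b * (-1:ℂ)^t from pow_add _ _ _,
            show v^n = v^(n-t) * v^t by rw [← pow_add]; congr 1; omega]
          ring
        rw [Finset.sum_congr rfl hcong, ← Finset.mul_sum]
        have hz : ∑ t ∈ Finset.range (n+1), ((-1:ℂ)^t *
            (((k'+a+b+n).choose (b+t) * ((l'+a+b+n).choose (a+(n-t)))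
              * ((a+(n-t)).choose a) * ascN (k'+1+a) (n-t) * ((b+t).choose b)
              * ascN (l'+1+b) t : ℕ) : ℂ)) = 0 := by
          have := inner_vanish k' l' a b n hnpos
          exact_mod_cast congrArg (Int.cast : ℤ → ℂ) this
        rw [hz, mul_zero]
      · intro s hs hns
        rw [Finset.mem_range] at hs
        rw [Finset.mem_Ico] at hns
        rcases Nat.lt_or_ge s b with h | h
        · rw [Nat.choose_eq_zero_of_lt h]; simp
        · have : r - s < a := by omega
          rw [Nat.choose_eq_zero_of_lt this]; simp

/-- for integers `k, l ≥ 1`, `r ≥ 0` and holomorphic `f, g` on `ℍ`,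
`[f,g]_r = Σ_{s=0}^r (−1)^s C(k+r−1,s) C(l+r−1,r−s) R_k^{r−s}(f) R_l^s(g)`. -/
theorem stmt12 (k l : ℕ) (hk : 1 ≤ k) (hl : 1 ≤ l) (r : ℕ)
    (f g : ℂ → ℂ) (hf : DifferentiableOn ℂ f UHP) (hg : DifferentiableOn ℂ g UHP) :
    ∀ τ ∈ UHP,
      RCbracket k l r f g τ
        = ∑ s ∈ Finset.range (r + 1),
            (-1 : ℂ) ^ s * (Nat.choose (k + r - 1) s : ℂ) *
              (Nat.choose (l + r - 1) (r - s) : ℂ) *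
              Riter (k : ℤ) (r - s) f τ * Riter (l : ℤ) s g τ := by
  intro τ hτ
  obtain ⟨k', rfl⟩ : ∃ k', k = k'+1 := ⟨k-1, by omega⟩
  obtain ⟨l', rfl⟩ : ∃ l', l = l'+1 := ⟨l-1, by omega⟩
  simp only [show k'+1+r-1 = k'+r by omega, show l'+1+r-1 = l'+r by omega]
  -- abbreviations
  set v : ℂ := V τ with hv
  -- step 1: expand each Riter
  have hstep1 : ∀ s ∈ Finset.range (r+1),
      (-1 : ℂ) ^ s * ((k'+r).choose s : ℂ) * ((l'+r).choose (r - s) : ℂ) *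
        Riter ((k'+1 : ℕ) : ℤ) (r - s) f τ * Riter ((l'+1 : ℕ) : ℤ) s g τ
      = ∑ a ∈ Finset.range (r+1), ∑ b ∈ Finset.range (r+1),
          (-1:ℂ)^s * (((k'+r).choose s : ℕ):ℂ) * (((l'+r).choose (r-s) : ℕ):ℂ)
          * ((((r-s).choose a : ℕ):ℂ) * ascC (((k'+1+a : ℕ):ℕ):ℂ) (r-s-a)
              * (v^(r-s-a) * fder a f τ)
            * ((((s.choose b : ℕ)):ℂ) * ascC (((l'+1+b : ℕ):ℕ):ℂ) (s-b)
              * (v^(s-b) * fder b g τ))) := by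
    intro s hs
    have hsr : s ≤ r := by have := Finset.mem_range.mp hs; omega
    have hR1 : Riter ((k'+1 : ℕ) : ℤ) (r-s) f τ
        = ∑ a ∈ Finset.range (r+1),
            (((r-s).choose a : ℕ):ℂ) * ascC (((k'+1+a : ℕ):ℕ):ℂ) (r-s-a)
              * (v^(r-s-a) * fder a f τ) := by
      rw [expansion ((k'+1 : ℕ) : ℤ) hf (r-s) τ hτ]
      have hca : ∀ a ∈ Finset.range (r-s+1),
          ((((r-s).choose a : ℕ)):ℂ) * ascC ((((k'+1:ℕ):ℤ):ℂ)+(a:ℂ)) (r-s-a)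
            * (V τ^(r-s-a) * fder a f τ)
          = (((r-s).choose a : ℕ):ℂ) * ascC (((k'+1+a : ℕ):ℕ):ℂ) (r-s-a)
            * (v^(r-s-a) * fder a f τ) := by
        intro a _
        rw [hv, show (((k'+1:ℕ):ℤ):ℂ)+(a:ℂ) = (((k'+1+a : ℕ):ℕ):ℂ) by push_cast; ring]
      rw [Finset.sum_congr rfl hca]
      apply Finset.sum_subset
      · intro x hx
        rw [Finset.mem_range] at hx ⊢
        omega
      · intro x hx hnx
        rw [Finset.mem_range] at hx hnx
        rw [Nat.choose_eq_zero_of_lt (by omega)]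
        simp
    have hR2 : Riter ((l'+1 : ℕ) : ℤ) s g τ
        = ∑ b ∈ Finset.range (r+1),
            ((s.choose b : ℕ):ℂ) * ascC (((l'+1+b : ℕ):ℕ):ℂ) (s-b)
              * (v^(s-b) * fder b g τ) := by
      rw [expansion ((l'+1 : ℕ) : ℤ) hg s τ hτ]
      have hcb : ∀ b ∈ Finset.range (s+1),
          (((s.choose b : ℕ)):ℂ) * ascC ((((l'+1:ℕ):ℤ):ℂ)+(b:ℂ)) (s-b)
            * (V τ^(s-b) * fder b g τ)
          = ((s.choose b : ℕ):ℂ) * ascC (((l'+1+b : ℕ):ℕ):ℂ) (s-b)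
            * (v^(s-b) * fder b g τ) := by
        intro b _
        rw [hv, show (((l'+1:ℕ):ℤ):ℂ)+(b:ℂ) = (((l'+1+b : ℕ):ℕ):ℂ) by push_cast; ring]
      rw [Finset.sum_congr rfl hcb]
      apply Finset.sum_subset
      · intro x hx
        rw [Finset.mem_range] at hx ⊢
        omega
      · intro x hx hnx
        rw [Finset.mem_range] at hx hnx
        rw [Nat.choose_eq_zero_of_lt (by omega)]
        simp
    rw [hR1, hR2, mul_assoc, Finset.sum_mul_sum, Finset.mul_sum]
    apply Finset.sum_congr rfl
    intro a _
    rw [Finset.mul_sum]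
  rw [Finset.sum_congr rfl hstep1]
  -- step 2: swap sums and evaluate inner sum
  rw [Finset.sum_comm]
  have hswap : ∀ a ∈ Finset.range (r+1),
      (∑ s ∈ Finset.range (r+1), ∑ b ∈ Finset.range (r+1),
        (-1:ℂ)^s * (((k'+r).choose s : ℕ):ℂ) * (((l'+r).choose (r-s) : ℕ):ℂ)
          * ((((r-s).choose a : ℕ):ℂ) * ascC (((k'+1+a : ℕ):ℕ):ℂ) (r-s-a)
              * (v^(r-s-a) * fder a f τ)
            * ((((s.choose b : ℕ)):ℂ) * ascC (((l'+1+b : ℕ):ℕ):ℂ) (s-b)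
              * (v^(s-b) * fder b g τ))))
      = ∑ b ∈ Finset.range (r+1),
          (if a + b = r then
            (-1:ℂ)^b * (((k'+r).choose b : ℕ):ℂ) * (((l'+r).choose a : ℕ):ℂ)
              * (fder a f τ * fder b g τ)
          else 0) := by
    intro a _
    rw [Finset.sum_comm]
    apply Finset.sum_congr rfl
    intro b hb
    exact inner_eval k' l' r a b hb v (fder a f τ) (fder b g τ)
  rw [Finset.sum_congr rfl hswap]
  -- step 3: collapse the if-sums
  have hcollapse : ∀ a ∈ Finset.range (r+1),
      (∑ b ∈ Finset.range (r+1),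
        (if a + b = r then
          (-1:ℂ)^b * (((k'+r).choose b : ℕ):ℂ) * (((l'+r).choose a : ℕ):ℂ)
            * (fder a f τ * fder b g τ)
        else 0))
      = (-1:ℂ)^(r-a) * (((k'+r).choose (r-a) : ℕ):ℂ) * (((l'+r).choose a : ℕ):ℂ)
          * (fder a f τ * fder (r-a) g τ) := by
    intro a ha
    have har : a ≤ r := by have := Finset.mem_range.mp ha; omega
    rw [Finset.sum_eq_single_of_mem (r-a) (by rw [Finset.mem_range]; omega)]
    · rw [if_pos (by omega)]
    · intro b hb hne
      rw [if_neg (by omega)]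
  rw [Finset.sum_congr rfl hcollapse]
  -- step 4: reflect
  unfold RCbracket
  simp only [show k'+1+r-1 = k'+r by omega, show l'+1+r-1 = l'+r by omega]
  rw [← Finset.sum_range_reflect (fun s => (-1 : ℂ) ^ s * (((k'+r).choose s : ℕ) : ℂ)
      * (((l'+r).choose (r - s) : ℕ) : ℂ) * fder (r - s) f τ * fder s g τ) (r+1)]
  apply Finset.sum_congr rfl
  intro a ha
  have har : a ≤ r := by have := Finset.mem_range.mp ha; omega
  rw [show r + 1 - 1 - a = r - a by omega, show r - (r-a) = a by omega]
  ring
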